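/- arXiv:2211.08478 — 2 statements merged into one kernel-verified Lean document; each statement's English description precedes it below -/
import Mathlib

section
/- If x(t) solves ẋ(t) = −Z(x(t))⁻¹∇f(x(t)) with Z(x)⁻¹ diagonal with entries in (d₁, d₂), f bounded below by −R, and f(x(0)) ≤ R, then for all t > 0, ∫₀ᵗ ‖∇f(x(s))‖² ds ≤ 2R/d₁. -/
open MeasureTheory intervalIntegral Set


/-- If `x(t)` solves the scaled gradient flow with diagonal `Z⁻¹` entries in `(d₁, d₂)`,
`f` bounded below by `−R` and `f(x(0)) ≤ R`, then for all `t > 0`,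
`∫₀ᵗ ‖∇f(x(s))‖² ds ≤ 2R/d₁`. -/
theorem scaled_gradient_flow_integral_bound
    {n : ℕ} (f : EuclideanSpace ℝ (Fin n) → ℝ)
    (z : EuclideanSpace ℝ (Fin n) → Fin n → ℝ) (d₁ d₂ R : ℝ)
    (hd₁ : 0 < d₁) (hR : 0 < R)
    (hz : ∀ p i, d₁ < z p i ∧ z p i < d₂)
    (hf : Differentiable ℝ f)
    (hbelow : ∀ p, -R < f p)
    (x : ℝ → EuclideanSpace ℝ (Fin n))
    (hx : Differentiable ℝ x)
    (hinit : f (x 0) ≤ R)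
    (hode : ∀ t, ∀ i, (deriv x t) i = -(z (x t) i) * (gradient f (x t)) i) :
    ∀ t > 0, ∫ s in (0:ℝ)..t, ‖gradient f (x s)‖ ^ 2 ≤ 2 * R / d₁ := by
  intro t ht
  set G : ℝ → ℝ := fun s => ‖gradient f (x s)‖ ^ 2 with hG
  by_cases hint : IntervalIntegrable G volume 0 t
  · -- real case
    -- derivative of f ∘ x
    have hder : ∀ s : ℝ, HasDerivAt (f ∘ x) (inner ℝ (gradient f (x s)) (deriv x s) : ℝ) s := by
      intro s
      have h1 : HasFDerivAt f (InnerProductSpace.toDual ℝ _ (gradient f (x s))) (x s) :=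
        ((hf (x s)).hasGradientAt).hasFDerivAt
      have h2 : HasDerivAt x (deriv x s) s := (hx s).hasDerivAt
      have := h1.comp_hasDerivAt s h2
      simpa [InnerProductSpace.toDual_apply_apply] using this
    have hkey : ∀ s : ℝ, (inner ℝ (gradient f (x s)) (deriv x s) : ℝ) ≤ -(d₁ * G s) := by
      intro s
      have hin : (inner ℝ (gradient f (x s)) (deriv x s) : ℝ)
          = ∑ i, gradient f (x s) i * deriv x s i := by
        rw [PiLp.inner_apply]
        simp [PiLp.inner_apply, RCLike.inner_apply, mul_comm]
      have hnorm : G s = ∑ i, gradient f (x s) i * gradient f (x s) i := by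
        rw [hG]
        simp only
        rw [← real_inner_self_eq_norm_sq]
        rw [PiLp.inner_apply]
        simp [PiLp.inner_apply, RCLike.inner_apply, pow_two]
      rw [hin, hnorm, Finset.mul_sum, ← Finset.sum_neg_distrib]
      apply Finset.sum_le_sum
      intro i _
      rw [hode s i]
      have hzi := (hz (x s) i).1
      have hsq : 0 ≤ gradient f (x s) i * gradient f (x s) i := mul_self_nonneg _
      nlinarith
    have hφint : IntegrableOn (fun s => -(d₁ * G s)) (Icc 0 t) := by
      have : IntegrableOn G (Icc 0 t) := by
        rw [integrableOn_Icc_iff_integrableOn_Ioc]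
        exact hint.1
      exact ((this.const_mul d₁).neg)
    have hcont : ContinuousOn (f ∘ x) (Icc 0 t) :=
      (hf.comp hx).continuous.continuousOn
    have hmain := sub_le_integral_of_hasDeriv_right_of_le ht.le hcont
      (fun s _ => ((hder s).hasDerivWithinAt)) hφint (fun s _ => hkey s)
    have hcalc : ∫ s in (0:ℝ)..t, -(d₁ * G s) = -(d₁ * ∫ s in (0:ℝ)..t, G s) := by
      rw [intervalIntegral.integral_neg, intervalIntegral.integral_const_mul]
    rw [hcalc] at hmain
    have hlb : -R < f (x t) := hbelow (x t)
    have : d₁ * ∫ s in (0:ℝ)..t, G s ≤ 2 * R := by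
      simp only [Function.comp] at hmain
      linarith
    rw [le_div_iff₀ hd₁]
    linarith
  · rw [intervalIntegral.integral_undef hint]
    positivity
end

section
/- Under assumptions that f is C², bounded below, coercive, has Lipschitz and bounded gradient, and Z(x)⁻¹ is diagonal with entries uniformly bounded in (d₁, d₂) with d₁ > 0, any solution x(t) of ẋ(t) = −Z(x(t))⁻¹∇f(x(t)) satisfies lim_{t→∞} ‖∇f(x(t))‖ = 0. -/
open Filter

lemma euclid_norm_sq' {n : ℕ} (v : EuclideanSpace ℝ (Fin n)) :
    ‖v‖ ^ 2 = ∑ i, (v i) ^ 2 := by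
  rw [EuclideanSpace.norm_eq, Real.sq_sqrt (by positivity)]
  simp [Real.norm_eq_abs, sq_abs]

/-- Theorem 1: under the paper's assumptions (A1)–(A5), any solution of the scaled
gradient flow `ẋ = −Z(x)⁻¹∇f(x)` satisfies `‖∇f(x(t))‖ → 0` as `t → ∞`. -/
theorem scaled_gradient_flow_gradient_tendsto_zero
    {n : ℕ} (f : EuclideanSpace ℝ (Fin n) → ℝ)
    (z : EuclideanSpace ℝ (Fin n) → Fin n → ℝ) (d₁ d₂ R B L : ℝ)
    (hf : ContDiff ℝ 2 f)
    (hR : 0 < R) (hbelow : ∀ p, -R < f p)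
    (hcoercive : Tendsto f (cocompact _) atTop)
    (hL : ∀ p q, ‖gradient f p - gradient f q‖ ≤ L * ‖p - q‖)
    (hB : 0 < B) (hbdd : ∀ p, ‖gradient f p‖ ≤ B)
    (hd₁ : 0 < d₁) (hd₂ : 0 < d₂)
    (hz : ∀ p i, d₁ < z p i ∧ z p i < d₂)
    (x : ℝ → EuclideanSpace ℝ (Fin n)) (x₀ : EuclideanSpace ℝ (Fin n))
    (hx : Differentiable ℝ x) (hx0 : x 0 = x₀)
    (hode : ∀ t, 0 ≤ t → ∀ i, (deriv x t) i = -(z (x t) i) * (gradient f (x t)) i) :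
    Tendsto (fun t => ‖gradient f (x t)‖) atTop (nhds 0) := by
  set g : EuclideanSpace ℝ (Fin n) → EuclideanSpace ℝ (Fin n) := gradient f with hgdef
  have hfd : Differentiable ℝ f := hf.differentiable two_ne_zero
  -- derivative of f ∘ x
  have hderiv : ∀ t : ℝ, HasDerivAt (fun u => f (x u))
      (@inner ℝ _ _ (g (x t)) (deriv x t)) t := by
    intro t
    have h1 : HasFDerivAt f (InnerProductSpace.toDual ℝ _ (g (x t))) (x t) :=
      (hasGradientAt_iff_hasFDerivAt).mp (hfd (x t)).hasGradientAt
    have h2 := h1.comp_hasDerivAt t (hx t).hasDerivAt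
    simpa [InnerProductSpace.toDual_apply_apply, Function.comp_def] using h2
  -- value of the derivative for t ≥ 0
  have hval : ∀ t : ℝ, 0 ≤ t →
      @inner ℝ _ _ (g (x t)) (deriv x t) = -∑ i, z (x t) i * (g (x t) i) ^ 2 := by
    intro t ht
    rw [PiLp.inner_apply]
    simp only [RCLike.inner_apply, conj_trivial]
    have h : ∀ i ∈ Finset.univ, deriv x t i * g (x t) i
        = -(z (x t) i * (g (x t) i) ^ 2) := by
      intro i _
      rw [hode t ht i]
      ring
    rw [Finset.sum_congr rfl h, Finset.sum_neg_distrib]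
  -- lower bound on the dissipation
  have hsum_lb : ∀ t : ℝ, d₁ * ‖g (x t)‖ ^ 2 ≤ ∑ i, z (x t) i * (g (x t) i) ^ 2 := by
    intro t
    rw [euclid_norm_sq', Finset.mul_sum]
    exact Finset.sum_le_sum fun i _ =>
      mul_le_mul_of_nonneg_right (hz (x t) i).1.le (sq_nonneg _)
  have hsum_nonneg : ∀ t : ℝ, 0 ≤ ∑ i, z (x t) i * (g (x t) i) ^ 2 := fun t =>
    Finset.sum_nonneg fun i _ =>
      mul_nonneg (le_trans hd₁.le (hz (x t) i).1.le) (sq_nonneg _)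
  have hcont : Continuous fun u => f (x u) := (hfd.comp hx).continuous
  -- f(x(t)) is antitone on [0, ∞)
  have hmono : AntitoneOn (fun u => f (x u)) (Set.Ici 0) := by
    apply antitoneOn_of_deriv_nonpos (convex_Ici 0) hcont.continuousOn
    · exact fun u _ => (hderiv u).differentiableAt.differentiableWithinAt
    · intro u hu
      rw [interior_Ici] at hu
      rw [(hderiv u).deriv, hval u (le_of_lt hu)]
      linarith [hsum_nonneg u]
  -- speed bound
  have hspeed : ∀ t : ℝ, 0 ≤ t → ‖deriv x t‖ ≤ d₂ * B := by
    intro t ht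
    have h1 : ‖deriv x t‖ ^ 2 ≤ (d₂ * B) ^ 2 := by
      rw [euclid_norm_sq']
      have hterm : ∀ i ∈ Finset.univ, (deriv x t i) ^ 2 ≤ d₂ ^ 2 * (g (x t) i) ^ 2 := by
        intro i _
        rw [hode t ht i]
        have hz1 := (hz (x t) i).1
        have hz2 := (hz (x t) i).2
        nlinarith [sq_nonneg (g (x t) i),
          mul_nonneg (mul_nonneg (sub_pos.mpr hz2).le (by linarith : (0:ℝ) ≤ d₂ + z (x t) i))
            (sq_nonneg (g (x t) i))]
      calc ∑ i, (deriv x t i) ^ 2 ≤ ∑ i, d₂ ^ 2 * (g (x t) i) ^ 2 :=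
            Finset.sum_le_sum hterm
        _ = d₂ ^ 2 * ‖g (x t)‖ ^ 2 := by rw [euclid_norm_sq', Finset.mul_sum]
        _ ≤ d₂ ^ 2 * B ^ 2 :=
            mul_le_mul_of_nonneg_left
              (pow_le_pow_left₀ (norm_nonneg _) (hbdd (x t)) 2) (sq_nonneg d₂)
        _ = (d₂ * B) ^ 2 := by ring
    nlinarith [norm_nonneg (deriv x t), mul_pos hd₂ hB]
  -- Lipschitz bound for x on [0, ∞)
  have hxlip : ∀ s t : ℝ, 0 ≤ s → 0 ≤ t → ‖x t - x s‖ ≤ (d₂ * B) * |t - s| := by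
    intro s t hs ht
    have := Convex.norm_image_sub_le_of_norm_hasDerivWithin_le
      (f := x) (f' := deriv x) (s := Set.Ici (0:ℝ)) (C := d₂ * B)
      (fun u _ => (hx u).hasDerivAt.hasDerivWithinAt)
      (fun u hu => hspeed u hu) (convex_Ici 0) hs ht
    simpa [Real.norm_eq_abs] using this
  -- Lipschitz bound for ‖g (x ·)‖ on [0, ∞)
  have hphilip : ∀ s t : ℝ, 0 ≤ s → 0 ≤ t →
      |‖g (x t)‖ - ‖g (x s)‖| ≤ (|L| * (d₂ * B)) * |t - s| := by
    intro s t hs ht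
    calc |‖g (x t)‖ - ‖g (x s)‖| ≤ ‖g (x t) - g (x s)‖ := abs_norm_sub_norm_le _ _
      _ ≤ L * ‖x t - x s‖ := hL _ _
      _ ≤ |L| * ‖x t - x s‖ :=
          mul_le_mul_of_nonneg_right (le_abs_self L) (norm_nonneg _)
      _ ≤ |L| * ((d₂ * B) * |t - s|) :=
          mul_le_mul_of_nonneg_left (hxlip s t hs ht) (abs_nonneg L)
      _ = (|L| * (d₂ * B)) * |t - s| := by ring
  -- decrease of f along a window where the dissipation is bounded below
  have hdrop : ∀ a δ c₂ : ℝ, 0 ≤ a → 0 ≤ δ →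
      (∀ u, a ≤ u → u ≤ a + δ → c₂ ≤ d₁ * ‖g (x u)‖ ^ 2) →
      f (x (a + δ)) + c₂ * δ ≤ f (x a) := by
    intro a δ c₂ ha hδ hlow
    have hder2 : ∀ u : ℝ, HasDerivAt (fun v => f (x v) + c₂ * v)
        (@inner ℝ _ _ (g (x u)) (deriv x u) + c₂) u := by
      intro u
      have hc : HasDerivAt (fun v : ℝ => c₂ * v) c₂ u := by
        simpa using (hasDerivAt_id u).const_mul c₂
      exact (hderiv u).add hc
    have hanti : AntitoneOn (fun v => f (x v) + c₂ * v) (Set.Icc a (a + δ)) := by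
      apply antitoneOn_of_deriv_nonpos (convex_Icc _ _)
      · exact (hcont.add (continuous_const.mul continuous_id)).continuousOn
      · exact fun u _ => (hder2 u).differentiableAt.differentiableWithinAt
      · intro u hu
        rw [interior_Icc] at hu
        have hu0 : 0 ≤ u := le_trans ha hu.1.le
        rw [(hder2 u).deriv, hval u hu0]
        have h1 := hlow u hu.1.le hu.2.le
        have h2 := hsum_lb u
        linarith
    have h := hanti (Set.left_mem_Icc.mpr (by linarith))
      (Set.right_mem_Icc.mpr (by linarith)) (by linarith)
    simp only at h
    nlinarith [h]
  -- main contradiction argument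
  by_contra hcon
  rw [Metric.tendsto_atTop] at hcon
  push_neg at hcon
  obtain ⟨ε, hε, htrig⟩ := hcon
  set K : ℝ := |L| * (d₂ * B) + 1 with hK
  have hKpos : 0 < K := by positivity
  set δ : ℝ := ε / (2 * K) with hδdef
  have hδpos : 0 < δ := by positivity
  set c : ℝ := d₁ * (ε / 2) ^ 2 * δ with hc
  have hcpos : 0 < c := by positivity
  have hKδ : K * δ = ε / 2 := by
    rw [hδdef]; field_simp
  have hstep : ∀ a : ℝ, 0 ≤ a → ∃ b, 0 ≤ b ∧ f (x b) + c ≤ f (x a) := by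
    intro a ha
    obtain ⟨t, hta, htε⟩ := htrig a
    have ht0 : 0 ≤ t := le_trans ha hta
    have hφt : ε ≤ ‖g (x t)‖ := by
      simpa [Real.dist_eq, abs_of_nonneg (norm_nonneg _)] using htε
    have hlow : ∀ u, t ≤ u → u ≤ t + δ → d₁ * (ε / 2) ^ 2 ≤ d₁ * ‖g (x u)‖ ^ 2 := by
      intro u h1 h2
      have hu0 : 0 ≤ u := le_trans ht0 h1
      have hl := hphilip t u ht0 hu0
      have habs : |u - t| ≤ δ := by
        rw [abs_of_nonneg (by linarith)]; linarith
      have hK0le : (|L| * (d₂ * B)) * |u - t| ≤ K * δ := by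
        apply mul_le_mul (by rw [hK]; linarith) habs (abs_nonneg _) hKpos.le
      have hφu : ε / 2 ≤ ‖g (x u)‖ := by
        have h3 : |‖g (x u)‖ - ‖g (x t)‖| ≤ ε / 2 := by
          calc |‖g (x u)‖ - ‖g (x t)‖| ≤ (|L| * (d₂ * B)) * |u - t| := hl
            _ ≤ K * δ := hK0le
            _ = ε / 2 := hKδ
        have h4 := (abs_le.mp h3).1
        linarith
      have h5 : (ε / 2) ^ 2 ≤ ‖g (x u)‖ ^ 2 := by
        apply pow_le_pow_left₀ (by positivity) hφu
      exact mul_le_mul_of_nonneg_left h5 hd₁.le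
    have hdropt := hdrop t δ (d₁ * (ε / 2) ^ 2) ht0 hδpos.le hlow
    have hmon := hmono (Set.mem_Ici.mpr ha) (Set.mem_Ici.mpr ht0) hta
    refine ⟨t + δ, by linarith, ?_⟩
    simp only at hmon
    rw [hc]
    nlinarith [hdropt, hmon]
  have hiter : ∀ N : ℕ, ∃ b, 0 ≤ b ∧ f (x b) ≤ f (x 0) - N * c := by
    intro N
    induction N with
    | zero => exact ⟨0, le_refl 0, by simp⟩
    | succ N ih =>
      obtain ⟨b, hb0, hbf⟩ := ih
      obtain ⟨b', hb'0, hdropped⟩ := hstep b hb0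
      refine ⟨b', hb'0, ?_⟩
      push_cast
      linarith
  obtain ⟨N, hN⟩ := exists_nat_gt ((f (x 0) + R) / c)
  obtain ⟨b, hb0, hbf⟩ := hiter N
  have h1 := hbelow (x b)
  have h2 : f (x 0) + R < N * c := (div_lt_iff₀ hcpos).mp hN
  linarith
end
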